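/- For every integer n ≥ 0 and every integer m, the coefficient a_n(m) of q^m in ∏_{k=0}^n (1+q^{3k+1})(1+q^{3k+2}) satisfies a_n(m) = (2^{2n+3}/π) ∫_0^{π/2} cos((3(n+1)^2 − 2m)θ) ∏_{k=0}^{n} cos((3k+1)θ) cos((3k+2)θ) dθ. -/

import Mathlib

open Polynomial Finset Real intervalIntegral

-- sum evaluation lemma
lemma natDeg_aux (d : ℕ) : (1 + (X:ℕ[X])^d).natDegree ≤ d := by
  simpa using natDegree_add_le 1 ((X:ℕ[X])^d)

lemma reflect_aux (d : ℕ) : reflect d (1 + (X:ℕ[X])^d) = 1 + X^d := by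
  rw [reflect_add, reflect_one, reflect_monomial, revAt_le (le_refl d), Nat.sub_self, pow_zero,
    add_comm]

lemma natDeg_factor (d1 d2 : ℕ) : ((1 + (X:ℕ[X])^d1) * (1 + X^d2)).natDegree ≤ d1 + d2 :=
  natDegree_mul_le.trans (add_le_add (natDeg_aux d1) (natDeg_aux d2))

lemma reflect_factor (d1 d2 : ℕ) :
    reflect (d1 + d2) ((1 + (X:ℕ[X])^d1) * (1 + X^d2)) = (1 + X^d1) * (1 + X^d2) := by
  rw [reflect_mul _ _ (natDeg_aux d1) (natDeg_aux d2), reflect_aux, reflect_aux]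

lemma sum_deg' (n : ℕ) : ∑ k ∈ Finset.range (n+1), (6*k+3) = 3*(n+1)^2 := by
  induction n with
  | zero => simp
  | succ n ih => rw [Finset.sum_range_succ, ih]; ring

lemma natDeg_prod' (n : ℕ) :
    (∏ k ∈ Finset.range (n + 1),
      ((1 + (X : ℕ[X]) ^ (3 * k + 1)) * (1 + X ^ (3 * k + 2)))).natDegree ≤ 3*(n+1)^2 := by
  refine (natDegree_prod_le _ _).trans ?_
  rw [← sum_deg' n]
  exact Finset.sum_le_sum fun k _ => (natDeg_factor _ _).trans (by omega)

lemma reflect_prod (n : ℕ) :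
    reflect (3*(n+1)^2) (∏ k ∈ Finset.range (n + 1),
      ((1 + (X : ℕ[X]) ^ (3 * k + 1)) * (1 + X ^ (3 * k + 2)))) =
    ∏ k ∈ Finset.range (n + 1), ((1 + (X : ℕ[X]) ^ (3 * k + 1)) * (1 + X ^ (3 * k + 2))) := by
  induction n with
  | zero => simpa using reflect_factor 1 2
  | succ n ih =>
      rw [Finset.prod_range_succ]
      have h3 : 3*(n+2)^2 = 3*(n+1)^2 + ((3*(n+1)+1) + (3*(n+1)+2)) := by ring
      rw [show n+1+1 = n+2 from rfl, h3,
        reflect_mul _ _ (natDeg_prod' n) (natDeg_factor _ _), ih, reflect_factor]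

lemma coeff_symm (n j : ℕ) (hj : j ≤ 3*(n+1)^2) :
    (∏ k ∈ Finset.range (n + 1),
      ((1 + (X : ℕ[X]) ^ (3 * k + 1)) * (1 + X ^ (3 * k + 2)))).coeff (3*(n+1)^2 - j) =
    (∏ k ∈ Finset.range (n + 1),
      ((1 + (X : ℕ[X]) ^ (3 * k + 1)) * (1 + X ^ (3 * k + 2)))).coeff j := by
  conv_rhs => rw [← reflect_prod n]
  rw [coeff_reflect, revAt_le hj]

lemma sum_eval (n m : ℕ) :
    ∑ j ∈ Finset.range (3*(n+1)^2+1),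
      ((∏ k ∈ Finset.range (n + 1),
        ((1 + (X : ℕ[X]) ^ (3 * k + 1)) * (1 + X ^ (3 * k + 2)))).coeff j : ℝ) *
      ((if ((j:ℤ) - m = 0) then Real.pi/4 else 0) +
       (if (((3*(n+1)^2 : ℕ):ℤ) - m - j = 0) then Real.pi/4 else 0))
    = Real.pi/2 * ((∏ k ∈ Finset.range (n + 1),
        ((1 + (X : ℕ[X]) ^ (3 * k + 1)) * (1 + X ^ (3 * k + 2)))).coeff m : ℝ) := by
  set P : ℕ[X] := ∏ k ∈ Finset.range (n + 1),
      ((1 + (X : ℕ[X]) ^ (3 * k + 1)) * (1 + X ^ (3 * k + 2))) with hP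
  by_cases hm : m ≤ 3*(n+1)^2
  · have term1 : ∀ j ∈ Finset.range (3*(n+1)^2+1),
        (P.coeff j : ℝ) * ((if ((j:ℤ) - m = 0) then Real.pi/4 else 0) +
          (if (((3*(n+1)^2 : ℕ):ℤ) - m - j = 0) then Real.pi/4 else 0))
        = (if j = m then (P.coeff j : ℝ) * (Real.pi/4) else 0) +
          (if j = 3*(n+1)^2 - m then (P.coeff j : ℝ) * (Real.pi/4) else 0) := by
      intro j _
      rw [mul_add, mul_ite, mul_zero, mul_ite, mul_zero]
      congr 1
      · by_cases h : j = m
        · rw [if_pos h, if_pos (by omega)]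
        · rw [if_neg (by omega), if_neg h]
      · by_cases h : j = 3*(n+1)^2 - m
        · rw [if_pos (by omega), if_pos h]
        · rw [if_neg (by omega), if_neg h]
    rw [Finset.sum_congr rfl term1, Finset.sum_add_distrib,
      Finset.sum_ite_eq' _ m (fun j => (P.coeff j : ℝ) * (Real.pi/4)),
      Finset.sum_ite_eq' _ (3*(n+1)^2 - m) (fun j => (P.coeff j : ℝ) * (Real.pi/4)),
      if_pos (by simp; omega : m ∈ Finset.range (3*(n+1)^2+1)),
      if_pos (by simp : 3*(n+1)^2 - m ∈ Finset.range (3*(n+1)^2+1))]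
    rw [show P.coeff (3*(n+1)^2 - m) = P.coeff m from coeff_symm n m hm]
    ring
  · have term0 : ∀ j ∈ Finset.range (3*(n+1)^2+1),
        (P.coeff j : ℝ) * ((if ((j:ℤ) - m = 0) then Real.pi/4 else 0) +
          (if (((3*(n+1)^2 : ℕ):ℤ) - m - j = 0) then Real.pi/4 else 0)) = 0 := by
      intro j hj
      simp only [Finset.mem_range] at hj
      rw [if_neg (by omega), if_neg (by omega)]
      ring
    rw [Finset.sum_congr rfl term0, Finset.sum_const, smul_zero,
      Polynomial.coeff_eq_zero_of_natDegree_lt (lt_of_le_of_lt (natDeg_prod' n) (by omega))]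
    simp

lemma integ_cos (c : ℝ) : ∫ θ in (0:ℝ)..(Real.pi/2), Real.cos (c*θ)
    = if c = 0 then Real.pi/2 else Real.sin (c*(Real.pi/2))/c := by
  split_ifs with hc
  · simp [hc]
  · rw [intervalIntegral.integral_comp_mul_left Real.cos hc, integral_cos]
    simp [smul_eq_mul, div_eq_inv_mul]

lemma integ_cos_even (t : ℤ) : ∫ θ in (0:ℝ)..(Real.pi/2), Real.cos ((2*t:ℝ)*θ)
    = if t = 0 then Real.pi/2 else 0 := by
  rw [integ_cos]
  split_ifs with h1 h2 h2
  · rfl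
  · exfalso; apply h2; have : (2*(t:ℝ)) = 0 := h1; exact_mod_cast (by linarith : (t:ℝ) = 0)
  · simp [h2] at h1
  · have : (2*(t:ℝ)) * (Real.pi/2) = (t:ℝ) * Real.pi := by ring
    rw [this, Real.sin_int_mul_pi, zero_div]

lemma integ_cos_cos (a b : ℤ) :
    ∫ θ in (0:ℝ)..(Real.pi/2), Real.cos (((a+b : ℤ):ℝ)*θ) * Real.cos (((a-b : ℤ):ℝ)*θ)
    = (if a = 0 then Real.pi/4 else 0) + (if b = 0 then Real.pi/4 else 0) := by
  have hpt : ∀ θ : ℝ, Real.cos (((a+b : ℤ):ℝ)*θ) * Real.cos (((a-b : ℤ):ℝ)*θ)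
      = (Real.cos ((2*a:ℝ)*θ) + Real.cos ((2*b:ℝ)*θ)) / 2 := by
    intro θ
    have h1 : ((a+b : ℤ):ℝ)*θ + ((a-b : ℤ):ℝ)*θ = (2*a:ℝ)*θ := by push_cast; ring
    have h2 : ((a+b : ℤ):ℝ)*θ - ((a-b : ℤ):ℝ)*θ = (2*b:ℝ)*θ := by push_cast; ring
    rw [← h1, ← h2, Real.cos_add, Real.cos_sub]
    ring
  rw [intervalIntegral.integral_congr (fun θ _ => hpt θ)]
  rw [intervalIntegral.integral_div]
  rw [intervalIntegral.integral_add ((by fun_prop : Continuous fun θ:ℝ => Real.cos ((2*(a:ℝ))*θ)).intervalIntegrable _ _)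
    ((by fun_prop : Continuous fun θ:ℝ => Real.cos ((2*(b:ℝ))*θ)).intervalIntegrable _ _)]
  rw [integ_cos_even a, integ_cos_even b]
  split_ifs <;> ring

lemma cexp_aux (w : ℂ) (d : ℕ) :
    2 * Complex.cos ((d:ℂ)*w)
      = Complex.exp (-((d:ℂ)*w)*Complex.I) * (1 + Complex.exp (2*w*Complex.I)^d) := by
  rw [← Complex.exp_nat_mul, mul_add, mul_one, ← Complex.exp_add,
    show -((d:ℂ)*w)*Complex.I + (d:ℂ)*(2*w*Complex.I) = ((d:ℂ)*w)*Complex.I by ring,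
    Complex.exp_mul_I, Complex.exp_mul_I, Complex.cos_neg, Complex.sin_neg]
  ring

lemma complex_key (n : ℕ) (θ : ℝ) :
    ((2^(2*n+2) * ∏ k ∈ Finset.range (n+1),
        (Real.cos ((3*k+1)*θ) * Real.cos ((3*k+2)*θ)) : ℝ) : ℂ)
    = ∑ j ∈ Finset.range (3*(n+1)^2+1),
        (((∏ k ∈ Finset.range (n + 1),
          ((1 + (X : ℕ[X]) ^ (3 * k + 1)) * (1 + X ^ (3 * k + 2)))).coeff j : ℝ) : ℂ) *
          Complex.exp ((((2*(j:ℝ) - 3*(n+1)^2)*θ : ℝ)) * Complex.I) := by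
  set z : ℂ := Complex.exp (2*(θ:ℂ)*Complex.I) with hz
  have step1 : ((2^(2*n+2) * ∏ k ∈ Finset.range (n+1),
        (Real.cos ((3*k+1)*θ) * Real.cos ((3*k+2)*θ)) : ℝ) : ℂ)
      = ∏ k ∈ Finset.range (n+1),
          ((4:ℂ) * (Complex.cos ((3*(k:ℂ)+1)*(θ:ℂ)) * Complex.cos ((3*(k:ℂ)+2)*(θ:ℂ)))) := by
    push_cast [Complex.ofReal_cos]
    rw [Finset.prod_mul_distrib, Finset.prod_mul_distrib, Finset.prod_const, Finset.card_range,
      show (4:ℂ)^(n+1) = 2^(2*n+2) by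
        rw [show (4:ℂ) = 2^2 by norm_num, ← pow_mul]; ring_nf,
      Finset.prod_mul_distrib]
  have step2 : ∀ k ∈ Finset.range (n+1),
      (4:ℂ) * (Complex.cos ((3*(k:ℂ)+1)*(θ:ℂ)) * Complex.cos ((3*(k:ℂ)+2)*(θ:ℂ)))
      = Complex.exp (-((6*(k:ℂ)+3)*(θ:ℂ))*Complex.I) *
          ((1 + z^(3*k+1)) * (1 + z^(3*k+2))) := by
    intro k _
    have a := cexp_aux (θ:ℂ) (3*k+1)
    have b := cexp_aux (θ:ℂ) (3*k+2)
    push_cast at a b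
    calc (4:ℂ) * (Complex.cos ((3*(k:ℂ)+1)*(θ:ℂ)) * Complex.cos ((3*(k:ℂ)+2)*(θ:ℂ)))
        = (2 * Complex.cos ((3*(k:ℂ)+1)*(θ:ℂ))) * (2 * Complex.cos ((3*(k:ℂ)+2)*(θ:ℂ))) := by
          ring
      _ = (Complex.exp (-((3*(k:ℂ)+1)*(θ:ℂ))*Complex.I) * (1 + z^(3*k+1))) *
          (Complex.exp (-((3*(k:ℂ)+2)*(θ:ℂ))*Complex.I) * (1 + z^(3*k+2))) := by
          rw [a, b]
      _ = (Complex.exp (-((3*(k:ℂ)+1)*(θ:ℂ))*Complex.I) *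
            Complex.exp (-((3*(k:ℂ)+2)*(θ:ℂ))*Complex.I)) *
          ((1 + z^(3*k+1)) * (1 + z^(3*k+2))) := by ring
      _ = Complex.exp (-((6*(k:ℂ)+3)*(θ:ℂ))*Complex.I) *
          ((1 + z^(3*k+1)) * (1 + z^(3*k+2))) := by
          rw [← Complex.exp_add]; ring_nf
  rw [step1, Finset.prod_congr rfl step2, Finset.prod_mul_distrib]
  have hsum : ∏ k ∈ Finset.range (n+1), Complex.exp (-((6*(k:ℂ)+3)*(θ:ℂ))*Complex.I)
      = Complex.exp (-(((3*(n+1)^2 : ℕ):ℂ)*(θ:ℂ))*Complex.I) := by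
    rw [← Complex.exp_sum]
    congr 1
    have h1 : ∑ k ∈ Finset.range (n+1), ((6*(k:ℂ)+3)) = ((3*(n+1)^2 : ℕ):ℂ) := by
      have := sum_deg' n
      push_cast
      exact_mod_cast congrArg (Nat.cast : ℕ → ℂ) this
    calc ∑ k ∈ Finset.range (n+1), (-((6*(k:ℂ)+3)*(θ:ℂ))*Complex.I)
        = (∑ k ∈ Finset.range (n+1), ((6*(k:ℂ)+3))) * (-(θ:ℂ)*Complex.I) := by
          rw [Finset.sum_mul]; exact Finset.sum_congr rfl fun k _ => by ring
      _ = -(((3*(n+1)^2 : ℕ):ℂ)*(θ:ℂ))*Complex.I := by rw [h1]; ring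
  have hprod : ∏ k ∈ Finset.range (n+1), ((1 + z^(3*k+1)) * (1 + z^(3*k+2)))
      = Polynomial.eval₂ (Nat.castRingHom ℂ) z
          (∏ k ∈ Finset.range (n + 1),
            ((1 + (X : ℕ[X]) ^ (3 * k + 1)) * (1 + X ^ (3 * k + 2)))) := by
    rw [Polynomial.eval₂_finset_prod]
    exact Finset.prod_congr rfl fun k _ => by
      simp [Polynomial.eval₂_mul, Polynomial.eval₂_add, Polynomial.eval₂_one,
        Polynomial.eval₂_X_pow]
  rw [hsum, hprod,
    Polynomial.eval₂_eq_sum_range' (Nat.castRingHom ℂ) (Nat.lt_succ_of_le (natDeg_prod' n)) z,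
    Finset.mul_sum]
  refine Finset.sum_congr rfl fun j hj => ?_
  rw [hz, ← Complex.exp_nat_mul]
  rw [mul_left_comm, ← Complex.exp_add]
  have h1 : ((Nat.castRingHom ℂ) ((∏ k ∈ Finset.range (n + 1),
      ((1 + (X : ℕ[X]) ^ (3 * k + 1)) * (1 + X ^ (3 * k + 2)))).coeff j) : ℂ)
      = (((∏ k ∈ Finset.range (n + 1),
      ((1 + (X : ℕ[X]) ^ (3 * k + 1)) * (1 + X ^ (3 * k + 2)))).coeff j : ℝ) : ℂ) := by
    simp
  rw [h1]
  congr 2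
  push_cast
  ring

lemma real_key (n : ℕ) (θ : ℝ) :
    ∏ k ∈ Finset.range (n+1), (Real.cos ((3*k+1)*θ) * Real.cos ((3*k+2)*θ))
    = (∑ j ∈ Finset.range (3*(n+1)^2+1),
        ((∏ k ∈ Finset.range (n + 1),
          ((1 + (X : ℕ[X]) ^ (3 * k + 1)) * (1 + X ^ (3 * k + 2)))).coeff j : ℝ) *
          Real.cos ((2*(j:ℝ) - 3*(n+1)^2)*θ)) / 2^(2*n+2) := by
  have h := congrArg Complex.re (complex_key n θ)
  rw [Complex.ofReal_re, Complex.re_sum] at h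
  simp only [Complex.re_ofReal_mul, Complex.exp_ofReal_mul_I_re] at h
  rw [eq_div_iff (by positivity : (2:ℝ)^(2*n+2) ≠ 0)]
  linarith [h]


lemma integral_sum_aux (E : ℕ) (c : ℝ) (a b : ℕ → ℝ) :
    (∫ θ in (0:ℝ)..(Real.pi/2), ∑ j ∈ Finset.range E, a j * (Real.cos (c*θ) * Real.cos (b j*θ)))
    = ∑ j ∈ Finset.range E, a j *
        ∫ θ in (0:ℝ)..(Real.pi/2), Real.cos (c*θ) * Real.cos (b j*θ) := by
  rw [intervalIntegral.integral_finset_sum (fun j _ =>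
    ((by fun_prop : Continuous fun θ:ℝ =>
      a j * (Real.cos (c*θ) * Real.cos (b j*θ))).intervalIntegrable _ _))]
  exact Finset.sum_congr rfl fun j _ => intervalIntegral.integral_const_mul _ _

set_option maxHeartbeats 1000000 in
theorem borwein_coeff_integral (n m : ℕ) :
    ((∏ k ∈ Finset.range (n + 1),
        ((1 + (X : ℕ[X]) ^ (3 * k + 1)) * (1 + X ^ (3 * k + 2)))).coeff m : ℝ) =
    2 ^ (2 * n + 3) / Real.pi *
      ∫ θ in (0 : ℝ)..(Real.pi / 2),
        Real.cos ((3 * (n + 1) ^ 2 - 2 * m : ℝ) * θ) *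
          ∏ k ∈ Finset.range (n + 1),
            (Real.cos ((3 * k + 1) * θ) * Real.cos ((3 * k + 2) * θ)) := by
  have key : ∀ θ : ℝ,
      Real.cos ((3 * (n + 1) ^ 2 - 2 * m : ℝ) * θ) *
        ∏ k ∈ Finset.range (n + 1),
          (Real.cos ((3 * k + 1) * θ) * Real.cos ((3 * k + 2) * θ))
      = (∑ j ∈ Finset.range (3*(n+1)^2+1),
          ((∏ k ∈ Finset.range (n + 1),
            ((1 + (X : ℕ[X]) ^ (3 * k + 1)) * (1 + X ^ (3 * k + 2)))).coeff j : ℝ) *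
            (Real.cos ((3 * (n + 1) ^ 2 - 2 * m : ℝ) * θ) *
              Real.cos ((2*(j:ℝ) - 3*(n+1)^2)*θ))) / 2^(2*n+2) := by
    intro θ
    rw [real_key n θ, mul_div_assoc']
    congr 1
    rw [Finset.mul_sum]
    exact Finset.sum_congr rfl fun j _ => by ring
  have hterm : ∀ j ∈ Finset.range (3*(n+1)^2+1),
      (∫ θ in (0:ℝ)..(Real.pi/2),
        Real.cos ((3 * (n + 1) ^ 2 - 2 * m : ℝ) * θ) *
          Real.cos ((2*(j:ℝ) - 3*(n+1)^2)*θ))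
      = ((if (((j:ℤ) - m) = 0) then Real.pi/4 else 0) +
         (if ((((3*(n+1)^2 : ℕ):ℤ) - m - j) = 0) then Real.pi/4 else 0)) := by
    intro j _
    have hpt : ∀ θ ∈ Set.uIcc (0:ℝ) (Real.pi/2),
        Real.cos ((3 * (n + 1) ^ 2 - 2 * m : ℝ) * θ) *
          Real.cos ((2*(j:ℝ) - 3*(n+1)^2)*θ)
        = Real.cos (((((j:ℤ)-m) + (((3*(n+1)^2 : ℕ):ℤ)-m-j) : ℤ):ℝ)*θ) *
          Real.cos (((((j:ℤ)-m) - (((3*(n+1)^2 : ℕ):ℤ)-m-j) : ℤ):ℝ)*θ) := by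
      intro θ _
      rw [show ((3 * (n + 1) ^ 2 - 2 * m : ℝ)) =
          (((((j:ℤ)-m) + (((3*(n+1)^2 : ℕ):ℤ)-m-j) : ℤ):ℝ)) by push_cast; ring,
        show ((2*(j:ℝ) - 3*(n+1)^2)) =
          (((((j:ℤ)-m) - (((3*(n+1)^2 : ℕ):ℤ)-m-j) : ℤ):ℝ)) by push_cast; ring]
    rw [intervalIntegral.integral_congr hpt, integ_cos_cos]
  have main : (∫ θ in (0 : ℝ)..(Real.pi / 2),
        Real.cos ((3 * (n + 1) ^ 2 - 2 * m : ℝ) * θ) *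
          ∏ k ∈ Finset.range (n + 1),
            (Real.cos ((3 * k + 1) * θ) * Real.cos ((3 * k + 2) * θ)))
      = (Real.pi/2 * ((∏ k ∈ Finset.range (n + 1),
          ((1 + (X : ℕ[X]) ^ (3 * k + 1)) * (1 + X ^ (3 * k + 2)))).coeff m : ℝ)) / 2^(2*n+2) := by
    have haux := integral_sum_aux (3*(n+1)^2+1) ((3 * (n + 1) ^ 2 - 2 * m : ℝ))
        (fun j => ((∏ k ∈ Finset.range (n + 1),
          ((1 + (X : ℕ[X]) ^ (3 * k + 1)) * (1 + X ^ (3 * k + 2)))).coeff j : ℝ))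
        (fun j => (2*(j:ℝ) - 3*(n+1)^2))
    beta_reduce at haux
    rw [intervalIntegral.integral_congr (fun θ _ => key θ),
      intervalIntegral.integral_div, haux]
    rw [Finset.sum_congr rfl (fun j hj => by rw [hterm j hj]), sum_eval n m]
  rw [main]
  have hpi := Real.pi_ne_zero
  field_simp
  ring
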